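/- For every natural number n ≥ 4, the root s 0 does not lie in Rad (Rad F): no root of the general monic polynomial of degree n ≥ 4 can be written using rational operations on the coefficients and at most two nested levels of radicals (the paper's third impossibility result). -/

import Mathlib

open MvPolynomial

/-- `E n` is the field of rational functions in `n` variables over `ℚ`. -/
noncomputable abbrev E (n : ℕ) : Type :=
  FractionRing (MvPolynomial (Fin n) ℚ)

/-- `s n i` is the image in `E n` of the variable `X i`; these are the roots of the
general monic polynomial of degree `n`. -/
noncomputable def s (n : ℕ) (i : Fin n) : E n :=
  algebraMap (MvPolynomial (Fin n) ℚ) (E n) (X i)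

/-- `F n` is the subfield of `E n` generated by the images of the elementary symmetric
polynomials `e₁, …, eₙ`, i.e. by the coefficients of the general monic polynomial
`∏ i, (Y - s i)` of degree `n`. -/
noncomputable def F (n : ℕ) : Subfield (E n) :=
  Subfield.closure
    (Set.range fun k : Fin n =>
      algebraMap (MvPolynomial (Fin n) ℚ) (E n) (esymm (Fin n) ℚ ((k : ℕ) + 1)))


/-- For a subfield `K` of a field `L`, `Rad K` is the subfield of `L` generated by `K`
together with all elements `y` such that `y ^ m ∈ K` for some integer `m ≥ 1`. -/
def Rad {L : Type*} [Field L] (K : Subfield L) : Subfield L :=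
  Subfield.closure ((K : Set L) ∪ {y : L | ∃ m : ℕ, 1 ≤ m ∧ y ^ m ∈ K})

/-! ### Auxiliary lemmas -/

/-- Units of a multivariate polynomial ring over `ℚ` are constants. -/
private lemma mv_isUnit_eq_C : ∀ (k : ℕ) (p : MvPolynomial (Fin k) ℚ), IsUnit p →
    ∃ c : ℚ, p = C c := by
  intro k
  induction k with
  | zero => exact fun p _ => ⟨_, eq_C_of_isEmpty p⟩
  | succ k ih =>
    intro p hp
    have h1 : IsUnit (finSuccEquiv ℚ k p) := hp.map _
    obtain ⟨r, hr, hrp⟩ := Polynomial.isUnit_iff.mp h1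
    obtain ⟨c, rfl⟩ := ih r hr
    refine ⟨c, ?_⟩
    have h2 : finSuccEquiv ℚ k (C c) = Polynomial.C (C c) := by
      simp [finSuccEquiv_apply]
    have h3 := congrArg (finSuccEquiv ℚ k).symm hrp
    rw [AlgEquiv.symm_apply_apply, ← h2, AlgEquiv.symm_apply_apply] at h3
    exact h3.symm

private lemma rat_rou {c : ℚ} {m : ℕ} (hm : 1 ≤ m) (h : c ^ m = 1) : c = 1 ∨ c = -1 := by
  have h1 : |c| ^ m = 1 := by rw [← abs_pow, h, abs_one]
  have h2 : |c| = 1 := by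
    rcases lt_trichotomy |c| 1 with hlt | heq | hgt
    · have : |c| ^ m < 1 := pow_lt_one₀ (abs_nonneg c) hlt (by omega)
      linarith
    · exact heq
    · have : 1 < |c| ^ m := one_lt_pow₀ hgt (by omega)
      linarith
  exact (abs_eq (by norm_num)).mp h2

/-- The only roots of unity in `E n` are `1` and `-1`. -/
private lemma E_rou {n m : ℕ} (hm : 1 ≤ m) {y : E n} (h : y ^ m = 1) : y = 1 ∨ y = -1 := by
  have hint : IsIntegral (MvPolynomial (Fin n) ℚ) y := by
    refine ⟨Polynomial.X ^ m - Polynomial.C 1, Polynomial.monic_X_pow_sub_C 1 (by omega), ?_⟩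
    simp [h]
  obtain ⟨p, hp⟩ := IsIntegrallyClosed.isIntegral_iff.mp hint
  have hinj := IsFractionRing.injective (MvPolynomial (Fin n) ℚ) (E n)
  have hpm : p ^ m = 1 := hinj (by rw [map_pow, hp, h, map_one])
  have hu : IsUnit p := IsUnit.of_mul_eq_one (a := p) (p ^ (m - 1)) (by
    rw [← pow_succ']
    have : m - 1 + 1 = m := by omega
    rw [this, hpm])
  obtain ⟨c, rfl⟩ := mv_isUnit_eq_C n p hu
  have hc : c ^ m = 1 := by
    have : (C (c ^ m) : MvPolynomial (Fin n) ℚ) = C 1 := by rw [map_pow, hpm, map_one]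
    exact C_injective _ _ this
  rcases rat_rou hm hc with h1 | h1
  · left; rw [← hp, h1]; simp
  · right; rw [← hp, h1]; simp

/-- The automorphism of `E n` induced by a permutation of the variables. -/
private noncomputable def hat {n : ℕ} (σ : Equiv.Perm (Fin n)) : E n ≃+* E n :=
  IsFractionRing.ringEquivOfRingEquiv (renameEquiv ℚ σ).toRingEquiv

private lemma hat_algebraMap {n : ℕ} (σ : Equiv.Perm (Fin n)) (p : MvPolynomial (Fin n) ℚ) :
    hat σ (algebraMap (MvPolynomial (Fin n) ℚ) (E n) p)
      = algebraMap (MvPolynomial (Fin n) ℚ) (E n) (rename σ p) :=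
  IsFractionRing.ringEquivOfRingEquiv_algebraMap _ p

private lemma hat_s {n : ℕ} (σ : Equiv.Perm (Fin n)) (i : Fin n) :
    hat σ (s n i) = s n (σ i) := by
  rw [s, hat_algebraMap, rename_X]; rfl

private lemma hat_symm_s {n : ℕ} (σ : Equiv.Perm (Fin n)) (i : Fin n) :
    (hat σ).symm (s n i) = s n (σ.symm i) := by
  apply (hat σ).injective
  rw [RingEquiv.apply_symm_apply, hat_s, Equiv.apply_symm_apply]

private lemma hat_fix_F {n : ℕ} (σ : Equiv.Perm (Fin n)) : ∀ x ∈ F n, hat σ x = x := by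
  intro x hx
  have hle : F n ≤ RingHom.eqLocusField ((hat σ : E n ≃+* E n) : E n →+* E n)
      (RingHom.id (E n)) := by
    rw [F]
    apply Subfield.closure_le.mpr
    rintro _ ⟨k, rfl⟩
    show hat σ _ = _
    rw [hat_algebraMap, rename_esymm]
    rfl
  exact hle hx

private lemma symm_fix {n : ℕ} (σ : E n ≃+* E n) {y : E n} (h : σ y = y) : σ.symm y = y := by
  conv_lhs => rw [← h]
  exact σ.symm_apply_apply y

private lemma symm_neg {n : ℕ} (σ : E n ≃+* E n) {y : E n} (h : σ y = -y) : σ.symm y = -y := by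
  apply σ.injective
  rw [RingEquiv.apply_symm_apply, map_neg, h, neg_neg]

private lemma sign_of_pow {n : ℕ} (K : Subfield (E n)) (σ : E n ≃+* E n)
    (hσ : ∀ x ∈ K, σ x = x) {y : E n} {m : ℕ} (hm : 1 ≤ m) (hy : y ^ m ∈ K) (hy0 : y ≠ 0) :
    σ y = y ∨ σ y = -y := by
  have h1 : σ y ^ m = y ^ m := by rw [← map_pow]; exact hσ _ hy
  have h2 : (σ y / y) ^ m = 1 := by
    rw [div_pow, h1, div_self (pow_ne_zero _ hy0)]
  rcases E_rou hm h2 with h3 | h3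
  · left; field_simp at h3; exact h3
  · right
    have := congrArg (· * y) h3
    simp only [div_mul_cancel₀ _ hy0, neg_mul, one_mul] at this
    exact this

/-- Commutators of automorphisms fixing `K` pointwise fix `Rad K` pointwise. -/
private lemma commutator_fix {n : ℕ} (K : Subfield (E n)) (σ τ : E n ≃+* E n)
    (hσ : ∀ x ∈ K, σ x = x) (hτ : ∀ x ∈ K, τ x = x) :
    ∀ y ∈ Rad K, σ (τ (σ.symm (τ.symm y))) = y := by
  have key : ∀ y : E n, (y ∈ (K : Set (E n)) ∪ {y : E n | ∃ m : ℕ, 1 ≤ m ∧ y ^ m ∈ K}) →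
      σ (τ (σ.symm (τ.symm y))) = y := by
    rintro y (hy | ⟨m, hm, hy⟩)
    · rw [symm_fix τ (hτ _ hy), symm_fix σ (hσ _ hy), hτ _ hy, hσ _ hy]
    · by_cases hy0 : y = 0
      · subst hy0; simp
      rcases sign_of_pow K σ hσ hm hy hy0 with h1 | h1 <;>
        rcases sign_of_pow K τ hτ hm hy hy0 with h2 | h2
      · simp [symm_fix τ h2, symm_fix σ h1, h1, h2]
      · simp [symm_neg τ h2, symm_fix σ h1, map_neg, h1, h2, neg_neg]
      · simp [symm_fix τ h2, symm_neg σ h1, map_neg, h1, h2, neg_neg]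
      · simp [symm_neg τ h2, symm_neg σ h1, map_neg, h1, h2, neg_neg]
  intro y hy
  have hle : Rad K ≤ RingHom.eqLocusField
      (((σ : E n →+* E n).comp (τ : E n →+* E n)).comp
        (((σ.symm : E n →+* E n)).comp ((τ.symm : E n →+* E n))))
      (RingHom.id (E n)) := by
    rw [Rad]
    exact Subfield.closure_le.mpr fun z hz => key z hz
  exact hle hy

/-- The commutator of two ring automorphisms, as a ring automorphism. -/
private def commAut {α : Type*} [Field α] (f g : α ≃+* α) : α ≃+* α :=
  ((g.symm.trans f.symm).trans g).trans f

private lemma commAut_apply {α : Type*} [Field α] (f g : α ≃+* α) (x : α) :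
    commAut f g x = f (g (f.symm (g.symm x))) := rfl

private lemma commAut_symm_apply {α : Type*} [Field α] (f g : α ≃+* α) (x : α) :
    (commAut f g).symm x = g (f (g.symm (f.symm x))) := rfl

/-- **Third impossibility result**: for `n ≥ 4`, no root of the general monic polynomial of
degree `n` can be written using rational operations on the coefficients and at most two
nested levels of radicals: `s 0 ∉ Rad (Rad F)`. -/
theorem third_impossibility (n : ℕ) (hn : 4 ≤ n) :
    s n ⟨0, by omega⟩ ∉ Rad (Rad (F n)) := by
  intro hmem
  set i0 : Fin n := ⟨0, by omega⟩
  set i1 : Fin n := ⟨1, by omega⟩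
  set i2 : Fin n := ⟨2, by omega⟩
  set i3 : Fin n := ⟨3, by omega⟩
  set a : Equiv.Perm (Fin n) := Equiv.swap i0 i1 with ha
  set b : Equiv.Perm (Fin n) := Equiv.swap i0 i2 with hb
  set c : Equiv.Perm (Fin n) := Equiv.swap i0 i3 with hc
  set σ₁ : E n ≃+* E n := commAut (hat a) (hat b) with hσ₁def
  set σ₂ : E n ≃+* E n := commAut (hat a) (hat c) with hσ₂def
  have hσ₁ : ∀ x ∈ Rad (F n), σ₁ x = x := by
    intro x hx
    rw [hσ₁def, commAut_apply]
    exact commutator_fix (F n) (hat a) (hat b) (hat_fix_F a) (hat_fix_F b) x hx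
  have hσ₂ : ∀ x ∈ Rad (F n), σ₂ x = x := by
    intro x hx
    rw [hσ₂def, commAut_apply]
    exact commutator_fix (F n) (hat a) (hat c) (hat_fix_F a) (hat_fix_F c) x hx
  have hg : σ₁ (σ₂ (σ₁.symm (σ₂.symm (s n i0)))) = s n i0 :=
    commutator_fix (Rad (F n)) σ₁ σ₂ hσ₁ hσ₂ _ hmem
  -- now evaluate the left-hand side explicitly
  have hswap_symm : ∀ (u v : Fin n), (Equiv.swap u v).symm = Equiv.swap u v := fun u v =>
    Equiv.symm_swap u v
  have h01 : i0 ≠ i1 := by simp [i0, i1, Fin.ext_iff]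
  have h02 : i0 ≠ i2 := by simp [i0, i2, Fin.ext_iff]
  have h03 : i0 ≠ i3 := by simp [i0, i3, Fin.ext_iff]
  have h12 : i1 ≠ i2 := by simp [i1, i2, Fin.ext_iff]
  have h13 : i1 ≠ i3 := by simp [i1, i3, Fin.ext_iff]
  have h23 : i2 ≠ i3 := by simp [i2, i3, Fin.ext_iff]
  have e1 : ∀ i : Fin n, σ₁ (s n i) = s n (a (b (a (b i)))) := by
    intro i
    rw [hσ₁def, commAut_apply, hat_symm_s, hat_symm_s, hat_s, hat_s, ha, hb,
      hswap_symm, hswap_symm]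
  have e1s : ∀ i : Fin n, σ₁.symm (s n i) = s n (b (a (b (a i)))) := by
    intro i
    rw [hσ₁def, commAut_symm_apply, hat_symm_s, hat_symm_s, hat_s, hat_s, ha, hb,
      hswap_symm, hswap_symm]
  have e2 : ∀ i : Fin n, σ₂ (s n i) = s n (a (c (a (c i)))) := by
    intro i
    rw [hσ₂def, commAut_apply, hat_symm_s, hat_symm_s, hat_s, hat_s, ha, hc,
      hswap_symm, hswap_symm]
  have e2s : ∀ i : Fin n, σ₂.symm (s n i) = s n (c (a (c (a i)))) := by
    intro i
    rw [hσ₂def, commAut_symm_apply, hat_symm_s, hat_symm_s, hat_s, hat_s, ha, hc,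
      hswap_symm, hswap_symm]
  -- chase the element i0
  rw [e2s, e1s, e2, e1] at hg
  -- compute the permutation values
  simp only [ha, hb, hc, Equiv.swap_apply_def, i0, i1, i2, i3, Fin.ext_iff] at hg
  norm_num at hg
  -- hg should now say s n ⟨1,_⟩ = s n ⟨0,_⟩
  have hXinj : Function.Injective
      (fun i : Fin n => algebraMap (MvPolynomial (Fin n) ℚ) (E n) (X i)) :=
    (IsFractionRing.injective (MvPolynomial (Fin n) ℚ) (E n)).comp X_injective
  have : i1 = i0 := hXinj hg
  exact h01 this.symm
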